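/- Under the hypotheses of projected online gradient descent with gradient bound G and domain diameter D, choosing the step size η = D√(1 + P_T/D)/(G√T) yields dynamic regret ∑_{t=1}^T f_t(θ_t) - ∑_{t=1}^T f_t(u_t) = O(G√(D T (D + P_T))), i.e., it is at most a constant times √(T(1 + P_T)) when D and G are treated as constants. -/

import Mathlib

local notation "⟪" x ", " y "⟫" => @inner ℝ _ _ x y



lemma grad_ineq {E : Type*} [NormedAddCommGroup E] [InnerProductSpace ℝ E] [CompleteSpace E]
    {f : E → ℝ} {g x : E} (hf : ConvexOn ℝ Set.univ f) (hg : HasGradientAt f g x)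
    (y : E) : f x + ⟪g, y - x⟫ ≤ f y := by
  set φ : ℝ → ℝ := fun s => f (x + s • (y - x)) with hφ
  have hA : ConvexOn ℝ Set.univ φ := by
    have h := hf.comp_affineMap (AffineMap.lineMap x y : ℝ →ᵃ[ℝ] E)
    have he : (Set.univ : Set ℝ) = (AffineMap.lineMap x y : ℝ →ᵃ[ℝ] E) ⁻¹' Set.univ := by simp
    rw [hφ, he]
    have hfun : (fun s : ℝ => f (x + s • (y - x))) = f ∘ (AffineMap.lineMap x y : ℝ →ᵃ[ℝ] E) := by
      funext s
      simp [AffineMap.lineMap_apply, add_comm]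
    rw [hfun]; exact h
  have hd : HasDerivAt φ ⟪g, y - x⟫ 0 := by
    have hcurve : HasDerivAt (fun s : ℝ => x + s • (y - x)) (y - x) 0 := by
      simpa using ((hasDerivAt_id (0:ℝ)).smul_const (y - x)).const_add x
    have hgx : HasFDerivAt f ((InnerProductSpace.toDual ℝ E) g) (x + (0:ℝ) • (y - x)) := by
      simpa using hg.hasFDerivAt
    have h2 := hgx.comp_hasDerivAt (x := (0:ℝ)) hcurve
    simpa [hφ, Function.comp_def] using h2
  have hs := hA.le_slope_of_hasDerivAt (Set.mem_univ (0:ℝ)) (Set.mem_univ 1) one_pos hd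
  have hφ1 : φ 1 = f y := by simp [hφ]
  have hφ0 : φ 0 = f x := by simp [hφ]
  rw [slope_def_field, hφ1, hφ0] at hs
  simp at hs
  linarith


lemma proj_contract {E : Type*} [NormedAddCommGroup E] [InnerProductSpace ℝ E]
    {Θ : Set E} (hconv : Convex ℝ Θ) {x p u : E} (hp : p ∈ Θ)
    (hmin : ∀ y ∈ Θ, ‖x - p‖ ≤ ‖x - y‖) (hu : u ∈ Θ) : ‖p - u‖ ≤ ‖x - u‖ := by
  haveI : Nonempty Θ := ⟨⟨p, hp⟩⟩
  have hinf : ‖x - p‖ = ⨅ w : Θ, ‖x - w‖ := by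
    refine le_antisymm (le_ciInf fun w => hmin w w.2) ?_
    exact ciInf_le ⟨0, fun _ ⟨w, hw⟩ => hw ▸ norm_nonneg _⟩ (⟨p, hp⟩ : Θ)
  have hchar := (norm_eq_iInf_iff_real_inner_le_zero hconv hp).mp hinf u hu
  have hxu : x - u = (x - p) + (p - u) := by abel
  have expand : ‖x - u‖^2 = ‖x - p‖^2 + 2*⟪x - p, p - u⟫ + ‖p - u‖^2 := by
    rw [hxu, norm_add_sq_real]
  have h0 : 0 ≤ ⟪x - p, p - u⟫ := by
    have : ⟪x - p, p - u⟫ = -⟪x - p, u - p⟫ := by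
      rw [← inner_neg_right, neg_sub]
    rw [this]; linarith
  have hsq : ‖p - u‖^2 ≤ ‖x - u‖^2 := by nlinarith [norm_nonneg (x - p)]
  calc ‖p - u‖ = Real.sqrt (‖p - u‖^2) := (Real.sqrt_sq (norm_nonneg _)).symm
    _ ≤ Real.sqrt (‖x - u‖^2) := Real.sqrt_le_sqrt hsq
    _ = ‖x - u‖ := Real.sqrt_sq (norm_nonneg _)


lemma step_bound {E : Type*} [NormedAddCommGroup E] [InnerProductSpace ℝ E] [CompleteSpace E]
    {Θ : Set E} (hconv : Convex ℝ Θ) {η G : ℝ} (hη : 0 < η) (hGnn : 0 ≤ G)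
    {ft : E → ℝ} {g θt u' : E} (hcvx : ConvexOn ℝ Set.univ ft)
    (hgrad : HasGradientAt ft g θt) (hgb : ‖g‖ ≤ G)
    {p : E} (hpΘ : p ∈ Θ) (hpmin : ∀ y ∈ Θ, ‖(θt - η • g) - p‖ ≤ ‖(θt - η • g) - y‖)
    (hu : u' ∈ Θ) :
    ft θt - ft u' ≤ (‖θt - u'‖^2 - ‖p - u'‖^2)/(2*η) + η*G^2/2 := by
  have h1 := grad_ineq hcvx hgrad u'
  have h2 : ‖p - u'‖ ≤ ‖(θt - η • g) - u'‖ := proj_contract hconv hpΘ hpmin hu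
  have hre : (θt - η • g) - u' = (θt - u') - η • g := by abel
  have h3 : ‖(θt - η • g) - u'‖^2
      = ‖θt - u'‖^2 - 2*η*⟪g, θt - u'⟫ + η^2*‖g‖^2 := by
    rw [hre, norm_sub_sq_real, real_inner_smul_right, norm_smul]
    rw [real_inner_comm]
    simp [abs_of_pos hη]
    ring
  have h4 : ‖p - u'‖^2 ≤ ‖θt - u'‖^2 - 2*η*⟪g, θt - u'⟫ + η^2*‖g‖^2 := by
    rw [← h3]
    have := pow_le_pow_left₀ (norm_nonneg _) h2 2
    linarith
  have h5 : ⟪g, u' - θt⟫ = -⟪g, θt - u'⟫ := by rw [← inner_neg_right, neg_sub]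
  have h7 : ft θt - ft u' ≤ ⟪g, θt - u'⟫ := by rw [h5] at h1; linarith
  have h6 : ‖g‖^2 ≤ G^2 := pow_le_pow_left₀ (norm_nonneg _) hgb 2
  have h8 : η^2*‖g‖^2 ≤ η^2*G^2 := mul_le_mul_of_nonneg_left h6 (sq_nonneg η)
  have h9 : 2*η*(ft θt - ft u') ≤ 2*η*⟪g, θt - u'⟫ :=
    mul_le_mul_of_nonneg_left h7 (by linarith)
  have key : 2*η*(ft θt - ft u') ≤ ‖θt - u'‖^2 - ‖p - u'‖^2 + η^2*G^2 := by linarith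
  have heq : (‖θt - u'‖^2 - ‖p - u'‖^2)/(2*η) + η*G^2/2
      = (‖θt - u'‖^2 - ‖p - u'‖^2 + η^2*G^2)/(2*η) := by
    field_simp
  rw [heq, le_div_iff₀ (by linarith : (0:ℝ) < 2*η)]
  linarith

lemma ogd_telescope {E : Type*} [NormedAddCommGroup E] [InnerProductSpace ℝ E] [CompleteSpace E]
    {Θ : Set E} (hconv : Convex ℝ Θ) {D G η : ℝ} (hη : 0 < η) (hDnn : 0 ≤ D)
    (hdiam : ∀ x ∈ Θ, ∀ y ∈ Θ, ‖x - y‖ ≤ D)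
    (f : ℕ → E → ℝ) (f' : ℕ → E → E)
    (hcvx : ∀ t, ConvexOn ℝ Set.univ (f t))
    (hgrad : ∀ t x, HasGradientAt (f t) (f' t x) x)
    (hG : ∀ t, ∀ x ∈ Θ, ‖f' t x‖ ≤ G)
    (proj : E → E) (hproj : ∀ x, proj x ∈ Θ ∧ ∀ y ∈ Θ, ‖x - proj x‖ ≤ ‖x - y‖)
    (u : ℕ → E) (hu : ∀ t, u t ∈ Θ)
    (θ : ℕ → E) (hθ1 : θ 1 ∈ Θ)
    (hrec : ∀ t, θ (t + 1) = proj (θ t - η • f' t (θ t))) :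
    ∀ N : ℕ, 1 ≤ N →
      ∑ t ∈ Finset.Icc 1 N, (f t (θ t) - f t (u t)) ≤
        (‖θ 1 - u 1‖^2 - ‖θ (N+1) - u N‖^2
          + 3*D*(∑ s ∈ Finset.Icc 1 (N-1), ‖u (s+1) - u s‖))/(2*η)
        + (N : ℝ) * (η*G^2/2) := by
  have hGnn : 0 ≤ G := le_trans (norm_nonneg _) (hG 1 _ (hu 1))
  have hΘ : ∀ t, 1 ≤ t → θ t ∈ Θ := by
    intro t ht
    cases t with
    | zero => omega
    | succ n => rw [hrec n]; exact (hproj _).1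
  have hstep : ∀ t, 1 ≤ t → f t (θ t) - f t (u t) ≤
      (‖θ t - u t‖^2 - ‖θ (t+1) - u t‖^2)/(2*η) + η*G^2/2 := by
    intro t ht
    have hmin := (hproj (θ t - η • f' t (θ t))).2
    have hpΘ : θ (t+1) ∈ Θ := hΘ (t+1) (by omega)
    refine step_bound hconv hη hGnn (hcvx t) (hgrad t (θ t))
      (hG t _ (hΘ t ht)) hpΘ ?_ (hu t)
    rw [hrec t]; exact hmin
  intro N hN
  induction N, hN using Nat.le_induction with
  | base => simpa using hstep 1 le_rfl
  | succ n hn ih =>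
    obtain ⟨M, rfl⟩ : ∃ M, n = M + 1 := ⟨n - 1, by omega⟩
    have hsum : ∑ t ∈ Finset.Icc 1 (M+1+1), (f t (θ t) - f t (u t))
        = ∑ t ∈ Finset.Icc 1 (M+1), (f t (θ t) - f t (u t))
          + (f (M+2) (θ (M+2)) - f (M+2) (u (M+2))) := by
      rw [Finset.sum_Icc_succ_top (by omega)]
    have hpath : ∑ s ∈ Finset.Icc 1 (M+1+1-1), ‖u (s+1) - u s‖
        = ∑ s ∈ Finset.Icc 1 (M+1-1), ‖u (s+1) - u s‖ + ‖u (M+2) - u (M+1)‖ := by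
      simp only [Nat.add_sub_cancel]
      rw [Finset.sum_Icc_succ_top (by omega)]
    have hshift : ‖θ (M+2) - u (M+2)‖^2
        ≤ ‖θ (M+2) - u (M+1)‖^2 + 3*D*‖u (M+2) - u (M+1)‖ := by
      set a := ‖θ (M+2) - u (M+2)‖
      set b := ‖θ (M+2) - u (M+1)‖
      set c := ‖u (M+2) - u (M+1)‖
      have hθm : θ (M+2) ∈ Θ := hΘ _ (by omega)
      have hb : b ≤ D := hdiam _ hθm _ (hu (M+1))
      have hc : c ≤ D := hdiam _ (hu (M+2)) _ (hu (M+1))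
      have htri : a ≤ b + c := by
        have he : θ (M+2) - u (M+2) = (θ (M+2) - u (M+1)) - (u (M+2) - u (M+1)) := by abel
        rw [show a = ‖θ (M+2) - u (M+2)‖ from rfl, he]
        exact norm_sub_le _ _
      have ha2 : a^2 ≤ (b+c)^2 := pow_le_pow_left₀ (norm_nonneg _) htri 2
      have hbn : 0 ≤ b := norm_nonneg _
      have hcn : 0 ≤ c := norm_nonneg _
      nlinarith
    have hst := hstep (M+2) (by omega)
    have h2η : (0:ℝ) < 2*η := by linarith
    have hdiv : (‖θ 1 - u 1‖^2 - ‖θ (M+1+1) - u (M+1)‖^2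
          + 3*D*(∑ s ∈ Finset.Icc 1 (M+1-1), ‖u (s+1) - u s‖))/(2*η)
        + (‖θ (M+2) - u (M+2)‖^2 - ‖θ (M+2+1) - u (M+2)‖^2)/(2*η)
        ≤ (‖θ 1 - u 1‖^2 - ‖θ (M+1+1+1) - u (M+1+1)‖^2
          + 3*D*(∑ s ∈ Finset.Icc 1 (M+1+1-1), ‖u (s+1) - u s‖))/(2*η) := by
      rw [← add_div, hpath]
      refine div_le_div_of_nonneg_right ?_ h2η.le
      have he2 : M+1+1+1 = M+2+1 := by omega
      rw [he2]
      linarith [hshift]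
    rw [hsum]
    push_cast
    simp only [Nat.add_sub_cancel, show M+1+1 = M+2 from by omega,
      show M+2+1 = M+3 from by omega, show M+1+1+1 = M+3 from by omega, show M+2-1 = M+1 from by omega] at ih hst hdiv ⊢
    push_cast at ih
    linarith [ih, hst, hdiv]

set_option maxHeartbeats 1000000


/-- With step size `η = D √(1 + P_T/D)/(G √T)`, projected OGD has dynamic regret
at most a constant (depending only on `D` and `G`) times `√(T (1 + P_T))`. -/
theorem stmt_2 {d : ℕ} (D G : ℝ) (hD : 0 < D) (hG : 0 < G) :
    ∃ C > 0, ∀ (Θ : Set (EuclideanSpace ℝ (Fin d))),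
      Θ.Nonempty → IsClosed Θ → Convex ℝ Θ →
      (∀ x ∈ Θ, ∀ y ∈ Θ, ‖x - y‖ ≤ D) →
      ∀ (T : ℕ), 1 ≤ T →
      ∀ (f : ℕ → EuclideanSpace ℝ (Fin d) → ℝ)
        (f' : ℕ → EuclideanSpace ℝ (Fin d) → EuclideanSpace ℝ (Fin d)),
      (∀ t, ConvexOn ℝ Set.univ (f t)) →
      (∀ t x, HasGradientAt (f t) (f' t x) x) →
      (∀ t, ∀ x ∈ Θ, ‖f' t x‖ ≤ G) →
      ∀ (proj : EuclideanSpace ℝ (Fin d) → EuclideanSpace ℝ (Fin d)),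
      (∀ x, proj x ∈ Θ ∧ ∀ y ∈ Θ, ‖x - proj x‖ ≤ ‖x - y‖) →
      ∀ (u : ℕ → EuclideanSpace ℝ (Fin d)), (∀ t, u t ∈ Θ) →
      ∀ (θ : ℕ → EuclideanSpace ℝ (Fin d)), θ 1 ∈ Θ →
      (∀ t, θ (t + 1) =
        proj (θ t - (D * Real.sqrt (1 + (∑ s ∈ Finset.Icc 1 (T - 1), ‖u (s + 1) - u s‖) / D)
          / (G * Real.sqrt T)) • f' t (θ t))) →
      ∑ t ∈ Finset.Icc 1 T, f t (θ t) - ∑ t ∈ Finset.Icc 1 T, f t (u t)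
        ≤ C * Real.sqrt ((T : ℝ) *
            (1 + ∑ s ∈ Finset.Icc 1 (T - 1), ‖u (s + 1) - u s‖)) := by
  refine ⟨2*G*(D+1), by positivity, ?_⟩
  intro Θ hne hcl hconv hdiam T hT f f' hcvx hgrad hG' proj hproj u hu θ hθ1 hrec
  set P := ∑ s ∈ Finset.Icc 1 (T - 1), ‖u (s + 1) - u s‖ with hPdef
  have hP : 0 ≤ P := Finset.sum_nonneg fun _ _ => norm_nonneg _
  set s1 := Real.sqrt (T : ℝ) with hs1def
  set s2 := Real.sqrt (1 + P) with hs2def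
  set Q := Real.sqrt (1 + P / D) with hQdef
  have hT1 : (1:ℝ) ≤ (T:ℝ) := by exact_mod_cast hT
  have hs1 : 1 ≤ s1 := by
    rw [hs1def, show (1:ℝ) = Real.sqrt 1 by simp]
    exact Real.sqrt_le_sqrt hT1
  have hs2 : 1 ≤ s2 := by
    rw [hs2def]
    simpa using Real.sqrt_le_sqrt (by linarith : (1:ℝ) ≤ 1 + P)
  have hPD : 0 ≤ P / D := div_nonneg hP hD.le
  have hQ : 1 ≤ Q := by
    rw [hQdef]
    simpa using Real.sqrt_le_sqrt (by linarith : (1:ℝ) ≤ 1 + P / D)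
  have hs1sq : s1^2 = (T:ℝ) := Real.sq_sqrt (by positivity)
  have hs2sq : s2^2 = 1 + P := Real.sq_sqrt (by linarith)
  have hQsq : Q^2 = 1 + P / D := Real.sq_sqrt (by linarith)
  have hDQ : D * Q^2 = D + P := by
    rw [hQsq]; field_simp
  set η := D * Q / (G * s1) with hηdef
  have hQpos : (0:ℝ) < Q := by linarith
  have hs1pos : (0:ℝ) < s1 := by linarith
  have hs2pos : (0:ℝ) < s2 := by linarith
  have hη : 0 < η := by
    rw [hηdef]
    exact div_pos (mul_pos hD hQpos) (mul_pos hG hs1pos)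
  have hbound := ogd_telescope hconv hη hD.le hdiam f f' hcvx hgrad hG'
    proj hproj u hu θ hθ1 hrec T hT
  have hd1 : ‖θ 1 - u 1‖^2 ≤ D^2 :=
    pow_le_pow_left₀ (norm_nonneg _) (hdiam _ hθ1 _ (hu 1)) 2
  have hd2 : 0 ≤ ‖θ (T+1) - u T‖^2 := sq_nonneg _
  have hmid : ∑ t ∈ Finset.Icc 1 T, (f t (θ t) - f t (u t))
      ≤ (D^2 + 3*D*P)/(2*η) + (T:ℝ)*(η*G^2/2) := by
    have hnum : ‖θ 1 - u 1‖^2 - ‖θ (T+1) - u T‖^2 + 3*D*P ≤ D^2 + 3*D*P := by linarith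
    have := div_le_div_of_nonneg_right hnum (by linarith : (0:ℝ) ≤ 2*η)
    linarith [hbound]
  -- final arithmetic
  have hQ0 : Q ≠ 0 := by linarith
  have hs10 : s1 ≠ 0 := by linarith
  have hG0 : G ≠ 0 := ne_of_gt hG
  have hD0 : D ≠ 0 := ne_of_gt hD
  set F := G * s1 / (2 * Q) with hFdef
  have hF : 0 ≤ F := le_of_lt (by rw [hFdef]; exact div_pos (mul_pos hG hs1pos) (by linarith))
  have e1 : (D^2 + 3*D*P)/(2*η) = F * (D + 3*P) := by
    rw [hηdef, hFdef]; field_simp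
  have e3 : (T:ℝ)*(η*G^2/2) = F * (D*Q^2) := by
    rw [hηdef, hFdef, ← hs1sq]; field_simp
  have hsmul : Real.sqrt ((T:ℝ) * (1 + P)) = s1 * s2 := by
    rw [hs1def, hs2def, ← Real.sqrt_mul (by positivity)]
  have e4 : 2*G*(D+1) * (s1 * s2) = F * (4*(D+1)*s2*Q) := by
    rw [hFdef]; field_simp; ring
  have h2 : D*Q ≤ (D+1)*s2 := by
    have hsq : (D*Q)^2 ≤ ((D+1)*s2)^2 := by
      have hmm : (D*Q)^2 = D * (D*Q^2) := by ring
      rw [hmm, hDQ]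
      have h1 : 0 ≤ D*P := mul_nonneg hD.le hP
      have h2' : 0 ≤ D*D*P := mul_nonneg (mul_nonneg hD.le hD.le) hP
      nlinarith [hs2sq]
    have := Real.sqrt_le_sqrt hsq
    rwa [Real.sqrt_sq (mul_nonneg hD.le hQpos.le),
      Real.sqrt_sq (mul_nonneg (by linarith) hs2pos.le)] at this
  have key : D + 3*P + D*Q^2 ≤ 4*(D+1)*s2*Q := by
    have hmul := mul_le_mul_of_nonneg_right h2 (by linarith : (0:ℝ) ≤ 4*Q)
    nlinarith [hDQ]
  have final : (D^2 + 3*D*P)/(2*η) + (T:ℝ)*(η*G^2/2)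
      ≤ 2*G*(D+1) * Real.sqrt ((T:ℝ) * (1 + P)) := by
    rw [e1, e3, hsmul, e4, ← mul_add]
    exact mul_le_mul_of_nonneg_left key hF
  rw [← Finset.sum_sub_distrib]
  linarith [hmid, final]
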